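/- Let d ≥ 3, k ≥ 3, G = K_{d+1}, and let H be a graph on kd vertices. If there exists a subset S of V(H) of size exactly 2d such that both H[S] and the complement graph restricted to S contain no K_{d+1}, then χ_G(H) + χ_G(complement of H) ≤ k + 1. -/

import Mathlib

open SimpleGraph

/-- `H` contains a copy of `G`: an injective map preserving adjacency. -/
def ContainsCopy {α β : Type*} (G : SimpleGraph α) (H : SimpleGraph β) : Prop :=
  ∃ f : α ↪ β, ∀ a b, G.Adj a b → H.Adj (f a) (f b)

/-- `H` is `G`-free. -/
def GFree {α β : Type*} (G : SimpleGraph α) (H : SimpleGraph β) : Prop :=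
  ¬ ContainsCopy G H

/-- The `G`-free chromatic number of `H`. -/
noncomputable def gChrom {α β : Type*} (G : SimpleGraph α) (H : SimpleGraph β) : ℕ :=
  sInf {k | ∃ c : β → Fin k, ∀ i, GFree G (H.induce {v | c v = i})}

/-- `H` is `G`-free `k`-critical. -/
def GFreeCritical {α β : Type*} (G : SimpleGraph α) (H : SimpleGraph β) (k : ℕ) : Prop :=
  gChrom G H = k ∧ ∀ F : H.Subgraph, F ≠ ⊤ → gChrom G F.coe ≤ k - 1

section Stmt14AuxSection

open Finset
set_option linter.unusedSectionVars false
set_option maxHeartbeats 1000000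

namespace Stmt14Aux

variable {β : Type*} [DecidableEq β]

/-- No `(d+1)`-clique of `H` inside the finset `P`. -/
def Ok (d : ℕ) (H : SimpleGraph β) (P : Finset β) : Prop :=
  ∀ s : Finset β, s ⊆ P → ¬ H.IsNClique (d + 1) s

/-- `c` is a coloring of `V` with `a` colors all of whose fibers are `Ok`. -/
def Good (d : ℕ) (H : SimpleGraph β) (V : Finset β) (c : β → ℕ) (a : ℕ) : Prop :=
  (∀ v ∈ V, c v < a) ∧ ∀ i : ℕ, Ok d H (V.filter fun v => c v = i)

variable {d : ℕ} {H : SimpleGraph β}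

lemma ok_of_card_le {P : Finset β} (h : P.card ≤ d) : Ok d H P := by
  intro s hs hcl
  have h2 := card_le_card hs
  rw [hcl.card_eq] at h2
  omega

lemma ok_subset {P Q : Finset β} (h : Ok d H P) (hQP : Q ⊆ P) : Ok d H Q :=
  fun s hs => h s (hs.trans hQP)

lemma ok_insert [DecidableRel H.Adj] {P : Finset β} {v : β}
    (hP : Ok d H P) (hv : (P.filter fun y => H.Adj v y).card < d) :
    Ok d H (insert v P) := by
  intro s hs hcl
  by_cases hvs : v ∈ s
  · have hsub : s.erase v ⊆ P.filter fun y => H.Adj v y := by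
      intro x hx
      have hxv : x ≠ v := ne_of_mem_erase hx
      have hxs : x ∈ s := mem_of_mem_erase hx
      have hxP : x ∈ P := by
        rcases mem_insert.1 (hs hxs) with h | h
        · exact absurd h hxv
        · exact h
      exact mem_filter.2 ⟨hxP, hcl.isClique hvs hxs (Ne.symm hxv)⟩
    have h2 := card_le_card hsub
    rw [card_erase_of_mem hvs, hcl.card_eq] at h2
    omega
  · refine hP s (fun x hx => ?_) hcl
    rcases mem_insert.1 (hs hx) with h | h
    · exact absurd (h ▸ hx) hvs
    · exact h


lemma good_insert [DecidableRel H.Adj] {V : Finset β} {c : β → ℕ} {a : ℕ} {v : β}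
    (hG : Good d H V c a) (ha : 1 ≤ a) (hv : v ∉ V)
    (hdeg : (V.filter fun y => H.Adj v y).card < d * a) :
    ∃ c', Good d H (insert v V) c' a := by
  have hmaps : ∀ x ∈ V.filter fun y => H.Adj v y, c x ∈ Finset.range a := fun x hx =>
    mem_range.2 (hG.1 x (mem_filter.1 hx).1)
  have hsum := card_eq_sum_card_fiberwise hmaps
  have hlt : ∑ i ∈ Finset.range a, ((V.filter fun y => H.Adj v y).filter fun x => c x = i).card
      < ∑ i ∈ Finset.range a, d := by
    rw [← hsum, Finset.sum_const, card_range, smul_eq_mul]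
    calc (V.filter fun y => H.Adj v y).card < d * a := hdeg
    _ = a * d := Nat.mul_comm _ _
  obtain ⟨i, hi, hilt⟩ := Finset.exists_lt_of_sum_lt hlt
  have hia : i < a := mem_range.1 hi
  refine ⟨Function.update c v i, ⟨?_, ?_⟩⟩
  · intro x hx
    rcases mem_insert.1 hx with rfl | hxV
    · rw [Function.update_self]; exact hia
    · rw [Function.update_of_ne (ne_of_mem_of_not_mem hxV hv)]; exact hG.1 x hxV
  · intro j
    by_cases hji : j = i
    · subst hji
      have hfib : ((insert v V).filter fun x => Function.update c v j x = j)
          = insert v (V.filter fun x => c x = j) := by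
        ext x
        rcases eq_or_ne x v with rfl | hxv
        · simp [Function.update_self, hv]
        · simp [Function.update_of_ne hxv, hxv]
      rw [hfib]
      refine ok_insert (hG.2 j) ?_
      have : (V.filter fun x => c x = j).filter (fun y => H.Adj v y)
          = (V.filter fun y => H.Adj v y).filter fun x => c x = j := filter_comm _ _ _
      rw [this]
      exact hilt
    · have hfib : ((insert v V).filter fun x => Function.update c v i x = j)
          = V.filter fun x => c x = j := by
        ext x
        rcases eq_or_ne x v with rfl | hxv
        · simp [Function.update_self, hv, Ne.symm hji, hji]
        · simp [Function.update_of_ne hxv, hxv]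
      rw [hfib]
      exact hG.2 j

lemma good_dump {V D : Finset β} {c : β → ℕ} {a : ℕ}
    (hG : Good d H V c a) (hdis : Disjoint V D) (hcard : D.card ≤ d) :
    Good d H (V ∪ D) (fun x => if x ∈ D then a else c x) (a + 1) := by
  constructor
  · intro x hx
    by_cases hxD : x ∈ D
    · simp [hxD]
    · simp only [hxD, if_false]
      have hxV : x ∈ V := by
        rcases mem_union.1 hx with h | h
        · exact h
        · exact absurd h hxD
      exact Nat.lt_succ_of_lt (hG.1 x hxV)
  · intro i
    rcases eq_or_ne i a with rfl | hia
    · have hfib : ((V ∪ D).filter fun x => (if x ∈ D then i else c x) = i) = D := by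
        ext x
        simp only [mem_filter, mem_union]
        constructor
        · rintro ⟨hor, hval⟩
          by_cases hxD : x ∈ D
          · exact hxD
          · exfalso
            rcases hor with h | h
            · rw [if_neg hxD] at hval
              exact absurd hval (Nat.ne_of_lt (hG.1 x h))
            · exact hxD h
        · intro hxD
          exact ⟨Or.inr hxD, by rw [if_pos hxD]⟩
      rw [hfib]
      exact ok_of_card_le hcard
    · have hfib : ((V ∪ D).filter fun x => (if x ∈ D then a else c x) = i)
          = V.filter fun x => c x = i := by
        ext x
        simp only [mem_filter, mem_union]
        constructor
        · rintro ⟨hor, hval⟩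
          by_cases hxD : x ∈ D
          · rw [if_pos hxD] at hval; exact absurd hval (Ne.symm hia)
          · rw [if_neg hxD] at hval
            rcases hor with h | h
            · exact ⟨h, hval⟩
            · exact absurd h hxD
        · rintro ⟨hxV, hval⟩
          have hxD : x ∉ D := disjoint_left.1 hdis hxV
          exact ⟨Or.inl hxV, by rw [if_neg hxD]; exact hval⟩
      rw [hfib]
      exact hG.2 i

lemma good_nospare [DecidableRel H.Adj] (D : Finset β) :
    ∀ (V : Finset β) (c : β → ℕ) {a : ℕ}, Disjoint V D → Good d H V c a → 1 ≤ a →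
    (∀ u ∈ D, (((V ∪ D).erase u).filter fun y => H.Adj u y).card < d * a) →
    ∃ c', Good d H (V ∪ D) c' a := by
  induction D using Finset.induction_on with
  | empty =>
    intro V c a _ hG _ _
    exact ⟨c, by simpa using hG⟩
  | @insert u D' hu ih =>
    intro V c a hdis hG ha hdeg
    have huV : u ∉ V := fun h => disjoint_left.1 hdis h (mem_insert_self u D')
    have hVsub : V ⊆ (V ∪ insert u D').erase u := fun x hx =>
      mem_erase.2 ⟨ne_of_mem_of_not_mem hx huV, mem_union_left _ hx⟩
    have hdegu : (V.filter fun y => H.Adj u y).card < d * a :=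
      lt_of_le_of_lt (card_le_card (filter_subset_filter _ hVsub))
        (hdeg u (mem_insert_self u D'))
    obtain ⟨c₁, hG₁⟩ := good_insert hG ha huV hdegu
    have hdis' : Disjoint (insert u V) D' := by
      rw [Finset.disjoint_left]
      intro x hx
      rcases mem_insert.1 hx with rfl | hxV
      · exact hu
      · intro hxD'
        exact disjoint_left.1 hdis hxV (mem_insert_of_mem hxD')
    have hset : insert u V ∪ D' = V ∪ insert u D' := by
      ext x
      simp only [mem_union, mem_insert]
      tauto
    obtain ⟨c', hG'⟩ := ih (insert u V) c₁ hdis' hG₁ ha (by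
      intro w hw
      have : (insert u V ∪ D').erase w = (V ∪ insert u D').erase w := by rw [hset]
      rw [this]
      exact hdeg w (mem_insert_of_mem hw))
    rw [hset] at hG'
    exact ⟨c', hG'⟩


lemma deg_compl [DecidableRel H.Adj] [DecidableRel Hᶜ.Adj] {V : Finset β} {x : β} (hx : x ∈ V) :
    ((V.erase x).filter fun y => Hᶜ.Adj x y).card
      = (V.card - 1) - ((V.erase x).filter fun y => H.Adj x y).card := by
  have h1 : ((V.erase x).filter fun y => Hᶜ.Adj x y)
      = (V.erase x).filter fun y => ¬ H.Adj x y := by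
    apply filter_congr
    intro y hy
    have hyx : x ≠ y := (ne_of_mem_erase hy).symm
    simp [compl_adj, hyx]
  have h2 := card_filter_add_card_filter_not (s := V.erase x) (p := fun y => H.Adj x y)
  rw [card_erase_of_mem hx] at h2
  rw [h1]
  omega

lemma exists_topd (w : β → ℕ) :
    ∀ (t : ℕ) (W : Finset β), t ≤ W.card →
      ∃ D : Finset β, D ⊆ W ∧ D.card = t ∧ ∀ x ∈ D, ∀ y ∈ W, y ∉ D → w y ≤ w x := by
  intro t
  induction t with
  | zero => exact fun W _ => ⟨∅, empty_subset _, card_empty, by simp⟩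
  | succ t ih =>
    intro W hW
    obtain ⟨D, hDW, hDcard, hprop⟩ := ih W (Nat.le_of_succ_le hW)
    have hne : (W \ D).Nonempty := by
      rw [← card_pos, card_sdiff_of_subset hDW]
      omega
    obtain ⟨x, hx, hmax⟩ := exists_max_image (W \ D) w hne
    have hxW : x ∈ W := (mem_sdiff.1 hx).1
    have hxD : x ∉ D := (mem_sdiff.1 hx).2
    refine ⟨insert x D, insert_subset hxW hDW, ?_, ?_⟩
    · rw [card_insert_of_notMem hxD, hDcard]
    · intro z hz y hyW hyD
      rcases mem_insert.1 hz with rfl | hzD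
      · exact hmax y (mem_sdiff.2 ⟨hyW, fun h => hyD (mem_insert_of_mem h)⟩)
      · exact hprop z hzD y hyW fun h => hyD (mem_insert_of_mem h)

lemma exists_chain (w : β → ℕ) (d : ℕ) :
    ∀ (t : ℕ) (V : Finset β), t * d ≤ V.card →
      ∃ D : ℕ → Finset β, (∀ j, j < t → D j ⊆ V ∧ (D j).card = d) ∧
        ∀ i j, i < j → j < t → ∀ x ∈ D i, ∀ y ∈ D j, w y ≤ w x := by
  intro t
  induction t with
  | zero => exact fun V _ => ⟨fun _ => ∅, fun j hj => absurd hj (Nat.not_lt_zero j), by omega⟩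
  | succ t ih =>
    intro V hV
    have hd0 : d ≤ V.card := le_trans (by rw [Nat.succ_mul]; omega) hV
    obtain ⟨D0, hD0W, hD0card, hmax⟩ := exists_topd w d V hd0
    obtain ⟨Drec, h1, h2⟩ := ih (V \ D0) (by
      rw [card_sdiff_of_subset hD0W, hD0card]
      rw [Nat.succ_mul] at hV
      omega)
    refine ⟨fun n => if n = 0 then D0 else Drec (n - 1), ?_, ?_⟩
    · intro j hj
      by_cases hj0 : j = 0
      · simp only [hj0, if_pos rfl]
        exact ⟨hD0W, hD0card⟩
      · simp only [if_neg hj0]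
        have hjt : j - 1 < t := by omega
        exact ⟨((h1 _ hjt).1).trans (sdiff_subset), (h1 _ hjt).2⟩
    · intro i j hij hjt x hx y hy
      simp only at hx hy
      have hj0 : j ≠ 0 := by omega
      rw [if_neg hj0] at hy
      have hjt' : j - 1 < t := by omega
      by_cases hi0 : i = 0
      · rw [if_pos hi0] at hx
        have hyV : y ∈ V \ D0 := (h1 _ hjt').1 hy
        exact hmax x hx y (mem_sdiff.1 hyV).1 (mem_sdiff.1 hyV).2
      · rw [if_neg hi0] at hx
        exact h2 (i - 1) (j - 1) (by omega) hjt' x hx y hy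


theorem exists_NG [DecidableRel H.Adj] [DecidableRel Hᶜ.Adj] (hd : 1 ≤ d) :
    ∀ (m : ℕ) (V : Finset β), V.card = m * d →
      ∃ (a b : ℕ) (ca cb : β → ℕ),
        Good d H V ca a ∧ Good d Hᶜ V cb b ∧ a + b ≤ m + 1 := by
  intro m
  induction m with
  | zero =>
    intro V hV
    have hVe : V = ∅ := card_eq_zero.1 (by simpa using hV)
    subst hVe
    refine ⟨0, 0, fun _ => 0, fun _ => 0, ⟨by simp, fun i => ok_of_card_le ?_⟩,
      ⟨by simp, fun i => ok_of_card_le ?_⟩, by omega⟩ <;>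
    · simp
  | succ m ih =>
    intro V hV
    rcases Nat.eq_zero_or_pos m with rfl | hm
    · -- one block: V has exactly d elements
      have hcard : V.card ≤ d := by rw [hV]; omega
      refine ⟨1, 1, fun _ => 0, fun _ => 0,
        ⟨fun v _ => Nat.zero_lt_one, fun i => ok_subset (ok_of_card_le hcard) (filter_subset _ _)⟩,
        ⟨fun v _ => Nat.zero_lt_one, fun i => ok_subset (ok_of_card_le hcard) (filter_subset _ _)⟩,
        by omega⟩
    · by_contra hP
      -- degree function inside V
      set degV : β → ℕ := fun x => ((V.erase x).filter fun y => H.Adj x y).card with hdegV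
      obtain ⟨D, hDsub, hchain⟩ := exists_chain degV d (m + 1) V (le_of_eq hV.symm)
      -- IH applied to V minus each block
      have hIH : ∀ j : Fin (m + 1), ∃ (a b : ℕ) (ca cb : β → ℕ),
          Good d H (V \ D j.val) ca a ∧ Good d Hᶜ (V \ D j.val) cb b ∧ a + b ≤ m + 1 := by
        intro j
        apply ih
        rw [card_sdiff_of_subset (hDsub j.val j.2).1, hV, (hDsub j.val j.2).2, Nat.succ_mul]
        omega
      choose a b ca cb hGa hGb hab using hIH
      have hdis : ∀ j : Fin (m + 1), Disjoint (V \ D j.val) (D j.val) := fun j => sdiff_disjoint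
      have hunion : ∀ j : Fin (m + 1), (V \ D j.val) ∪ D j.val = V := fun j =>
        sdiff_union_of_subset (hDsub j.val j.2).1
      have hVjne : ∀ j : Fin (m + 1), (V \ D j.val).Nonempty := by
        intro j
        rw [← card_pos, card_sdiff_of_subset (hDsub j.val j.2).1, hV, (hDsub j.val j.2).2, Nat.succ_mul]
        have := Nat.mul_pos hm hd
        omega
      have ha1 : ∀ j, 1 ≤ a j := by
        intro j
        obtain ⟨v, hv⟩ := hVjne j
        have := (hGa j).1 v hv
        omega
      have hb1 : ∀ j, 1 ≤ b j := by
        intro j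
        obtain ⟨v, hv⟩ := hVjne j
        have := (hGb j).1 v hv
        omega
      -- tightness
      have htight : ∀ j, a j + b j = m + 1 := by
        intro j
        by_contra hne
        have hle : a j + b j ≤ m := by have := hab j; omega
        have gA := good_dump (hGa j) (hdis j) (le_of_eq (hDsub j.val j.2).2)
        have gB := good_dump (hGb j) (hdis j) (le_of_eq (hDsub j.val j.2).2)
        rw [hunion j] at gA gB
        exact hP ⟨a j + 1, b j + 1, _, _, gA, gB, by omega⟩
      -- every block contains a heavy vertex
      have hheavy : ∀ j, ∃ u ∈ D j.val, d * a j ≤ degV u := by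
        intro j
        by_contra hno
        push_neg at hno
        obtain ⟨cA, hcA⟩ := good_nospare (D j.val) (V \ D j.val) (ca j) (hdis j) (hGa j) (ha1 j)
          (by
            intro u hu
            rw [hunion j]
            exact hno u hu)
        rw [hunion j] at hcA
        have gB := good_dump (hGb j) (hdis j) (le_of_eq (hDsub j.val j.2).2)
        rw [hunion j] at gB
        refine hP ⟨a j, b j + 1, _, _, hcA, gB, ?_⟩
        have := htight j
        omega
      -- every block contains a light vertex
      have hlight : ∀ j, ∃ u ∈ D j.val, degV u < d * a j := by
        intro j
        by_contra hno
        push_neg at hno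
        have hdb : 1 ≤ d * b j := Nat.mul_pos hd (hb1 j)
        obtain ⟨cB, hcB⟩ := good_nospare (D j.val) (V \ D j.val) (cb j) (hdis j) (hGb j) (hb1 j)
          (by
            intro u hu
            rw [hunion j]
            have huV : u ∈ V := (hDsub j.val j.2).1 hu
            rw [deg_compl huV]
            have hsame : ((V.erase u).filter fun y => H.Adj u y).card = degV u := rfl
            rw [hsame]
            have h1 : d * a j ≤ degV u := hno u hu
            have h2 : degV u ≤ V.card - 1 := by
              apply le_trans (card_le_card (filter_subset _ _))
              rw [card_erase_of_mem huV]
            have h3 : V.card = d * a j + d * b j := by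
              rw [hV, ← htight j]
              ring
            omega)
        rw [hunion j] at hcB
        have gA := good_dump (hGa j) (hdis j) (le_of_eq (hDsub j.val j.2).2)
        rw [hunion j] at gA
        refine hP ⟨a j + 1, b j, _, _, gA, hcB, ?_⟩
        have := htight j
        omega
      -- pigeonhole on the value of a j
      have key : ∀ p q : Fin (m + 1), p < q → a p = a q → False := by
        intro p q hpq heq
        obtain ⟨vl, hvl, hvlight⟩ := hlight p
        obtain ⟨uh, huh, huheavy⟩ := hheavy q
        have hcross : degV uh ≤ degV vl :=
          hchain p.val q.val hpq q.2 vl hvl uh huh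
        rw [heq] at hvlight
        omega
      have hf : ∀ j : Fin (m + 1), a j - 1 < m := by
        intro j
        have := htight j
        have := ha1 j
        have := hb1 j
        omega
      obtain ⟨j, j', hne, hfe⟩ := Fintype.exists_ne_map_eq_of_card_lt
        (fun j : Fin (m + 1) => (⟨a j - 1, hf j⟩ : Fin m)) (by simp)
      have haeq : a j = a j' := by
        have h1 := ha1 j
        have h2 := ha1 j'
        have := Fin.mk.injEq (a j - 1) (hf j) (a j' - 1) (hf j')
        rw [this] at hfe
        omega
      rcases lt_or_gt_of_ne hne with hlt | hlt
      · exact key j j' hlt haeq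
      · exact key j' j hlt haeq.symm


lemma gfree_induce_iff {β : Type*} (H : SimpleGraph β) (A : Set β) (r : ℕ) :
    GFree (completeGraph (Fin r)) (H.induce A) ↔
      ∀ s : Finset β, ↑s ⊆ A → ¬ H.IsNClique r s := by
  constructor
  · intro h s hsA hclique
    apply h
    have hcard : s.card = r := hclique.card_eq
    let e : Fin r ≃ {x // x ∈ s} := (finCongr hcard.symm).trans s.equivFin.symm
    refine ⟨⟨fun i => ⟨(e i : β), hsA (e i).2⟩, ?_⟩, ?_⟩
    · intro i j hij
      apply e.injective
      exact Subtype.ext (by simpa using hij)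
    · intro i j hij
      have hne : (e i : β) ≠ (e j : β) := by
        intro hc
        exact hij (e.injective (Subtype.ext hc))
      have hadj : H.Adj (e i : β) (e j : β) :=
        hclique.isClique (e i).2 (e j).2 hne
      exact hadj
  · rintro h ⟨f, hf⟩
    set emb : Fin r ↪ β := f.trans (Function.Embedding.subtype _) with hemb
    refine h (Finset.univ.map emb) ?_ ⟨?_, by simp⟩
    · intro x hx
      simp only [Finset.coe_map, Set.mem_image, Finset.mem_coe] at hx
      obtain ⟨i, _, rfl⟩ := hx
      exact (f i).2
    · intro x hx y hy hxy
      simp only [Finset.coe_map, Set.mem_image, Finset.mem_coe] at hx hy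
      obtain ⟨i, _, rfl⟩ := hx
      obtain ⟨j, _, rfl⟩ := hy
      have hij : i ≠ j := by
        intro hc
        exact hxy (by rw [hc])
      have := hf i j hij
      simpa [SimpleGraph.comap_adj, hemb] using this


/-- assemble a total coloring from the `S` part plus a good coloring of `univ \ S`. -/
lemma gchrom_le_of_good {β : Type*} [Fintype β] [DecidableEq β] {d : ℕ} (H : SimpleGraph β)
    (S : Finset β) (hS : Ok d H S) {a : ℕ} {ca : β → ℕ}
    (hG : Good d H (Finset.univ \ S) ca a) :
    gChrom (completeGraph (Fin (d + 1))) H ≤ a + 1 := by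
  set W : Finset β := Finset.univ \ S with hW
  set cf : β → ℕ := fun v => if v ∈ S then a else ca v with hcf
  have hbound : ∀ v, cf v < a + 1 := by
    intro v
    by_cases hv : v ∈ S
    · simp [hcf, hv]
    · have hvW : v ∈ W := mem_sdiff.2 ⟨mem_univ v, hv⟩
      have := hG.1 v hvW
      simp only [hcf, if_neg hv]
      omega
  have hfib : ∀ i : ℕ, Ok d H (Finset.univ.filter fun v => cf v = i) := by
    intro i
    rcases eq_or_ne i a with rfl | hia
    · have : (Finset.univ.filter fun v => cf v = i) = S := by
        ext v
        simp only [mem_filter, mem_univ, true_and, hcf]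
        by_cases hv : v ∈ S
        · simp [hv]
        · simp only [if_neg hv]
          constructor
          · intro h
            exfalso
            have hvW : v ∈ W := mem_sdiff.2 ⟨mem_univ v, hv⟩
            have := hG.1 v hvW
            omega
          · intro h
            exact absurd h hv
      rw [this]
      exact hS
    · have : (Finset.univ.filter fun v => cf v = i) = W.filter fun v => ca v = i := by
        ext v
        simp only [mem_filter, mem_univ, true_and, hcf, hW, mem_sdiff]
        by_cases hv : v ∈ S
        · simp [hv, Ne.symm hia]
        · simp [hv]
      rw [this]
      exact hG.2 i
  have hmem : (a + 1) ∈ {k | ∃ c : β → Fin k, ∀ i,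
      GFree (completeGraph (Fin (d + 1))) (H.induce {v | c v = i})} := by
    refine ⟨fun v => ⟨cf v, hbound v⟩, ?_⟩
    intro i
    have hset : {v | (⟨cf v, hbound v⟩ : Fin (a + 1)) = i}
        = ↑(Finset.univ.filter fun v => cf v = (i : ℕ)) := by
      ext v
      simp [Fin.ext_iff]
    rw [hset]
    rw [gfree_induce_iff]
    intro s hsub
    exact hfib (i : ℕ) s (by exact_mod_cast hsub)
  exact Nat.sInf_le hmem


end Stmt14Aux

end Stmt14AuxSection

theorem stmt14 {β : Type*} [Fintype β] (d k : ℕ) (hd : 3 ≤ d) (hk : 3 ≤ k)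
    (H : SimpleGraph β) (hn : Fintype.card β = k * d)
    (S : Finset β) (hS : S.card = 2 * d)
    (h1 : GFree (completeGraph (Fin (d + 1))) (H.induce (↑S : Set β)))
    (h2 : GFree (completeGraph (Fin (d + 1))) (Hᶜ.induce (↑S : Set β))) :
    gChrom (completeGraph (Fin (d + 1))) H + gChrom (completeGraph (Fin (d + 1))) Hᶜ ≤
      k + 1 := by
  classical
  have hokS1 : Stmt14Aux.Ok d H S := by
    intro s hs
    exact (Stmt14Aux.gfree_induce_iff H (↑S) (d + 1)).1 h1 s (by exact_mod_cast hs)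
  have hokS2 : Stmt14Aux.Ok d Hᶜ S := by
    intro s hs
    exact (Stmt14Aux.gfree_induce_iff Hᶜ (↑S) (d + 1)).1 h2 s (by exact_mod_cast hs)
  have hWcard : (Finset.univ \ S).card = (k - 2) * d := by
    rw [Finset.card_sdiff_of_subset (Finset.subset_univ S), Finset.card_univ, hn, hS, Nat.sub_mul]
  obtain ⟨a, b, ca, cb, hGa, hGb, hab⟩ :=
    Stmt14Aux.exists_NG (H := H) (by omega) (k - 2) (Finset.univ \ S) hWcard
  have hA := Stmt14Aux.gchrom_le_of_good H S hokS1 hGa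
  have hB := Stmt14Aux.gchrom_le_of_good Hᶜ S hokS2 hGb
  have : a + b ≤ k - 1 := by omega
  omega
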